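/- arXiv:1408.1083 — 3 statements merged into one kernel-verified Lean document; each statement's English description precedes it below -/
import Mathlib

section
/- For real numbers x, t with 1 ≤ x < t, the sum ∑_{1 ≤ k ≤ x} 1/√(kt - k²) is at most 2·arctan(√(x/(t-x))) + 1/√(t-1) + 2√x/(t·√(t-x)). -/
open Real

noncomputable def ff (t u : ℝ) : ℝ := 1 / Real.sqrt (u * t - u ^ 2)

noncomputable def hh (t u : ℝ) : ℝ := ff t (max u (t / 2))

lemma ff_nonneg (t u : ℝ) : 0 ≤ ff t u :=
  div_nonneg zero_le_one (Real.sqrt_nonneg _)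

lemma ff_anti (t b c : ℝ) (hb : 0 < b * t - b ^ 2) (h : b * t - b ^ 2 ≤ c * t - c ^ 2) :
    ff t c ≤ ff t b :=
  one_div_le_one_div_of_le (Real.sqrt_pos.2 hb) (Real.sqrt_le_sqrt h)

lemma key (t a : ℝ) (ha : 1 ≤ a) (hat : a + 1 < t) :
    ∀ u ∈ Set.Icc a (a + 1), ff t (a + 1) - (hh t (a + 1) - hh t a) ≤ ff t u := by
  intro u hu
  obtain ⟨hu1, hu2⟩ := hu
  have hupos : 0 < u * t - u ^ 2 := by nlinarith
  rcases le_or_gt (a + 1) (t / 2) with h1 | h1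
  · have e1 : max (a + 1) (t / 2) = t / 2 := max_eq_right h1
    have e2 : max a (t / 2) = t / 2 := max_eq_right (by linarith)
    unfold hh
    rw [e1, e2, sub_self, sub_zero]
    refine ff_anti t u (a + 1) hupos ?_
    nlinarith [mul_nonneg (by linarith : (0:ℝ) ≤ a + 1 - u) (by linarith : (0:ℝ) ≤ t - (a + 1) - u)]
  · rcases le_or_gt (t / 2) a with h2 | h2
    · have e1 : max (a + 1) (t / 2) = a + 1 := max_eq_left (by linarith)
      have e2 : max a (t / 2) = a := max_eq_left h2
      unfold hh
      rw [e1, e2]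
      have : ff t a ≤ ff t u := by
        refine ff_anti t u a hupos ?_
        nlinarith [mul_nonneg (by linarith : (0:ℝ) ≤ u - a) (by linarith : (0:ℝ) ≤ u + a - t)]
      linarith
    · have e1 : max (a + 1) (t / 2) = a + 1 := max_eq_left h1.le
      have e2 : max a (t / 2) = t / 2 := max_eq_right h2.le
      unfold hh
      rw [e1, e2]
      have : ff t (t / 2) ≤ ff t u := by
        refine ff_anti t u (t / 2) hupos ?_
        nlinarith [sq_nonneg (u - t / 2)]
      linarith

lemma ff_intOn (t a b : ℝ) (ha : 0 < a) (hb : b < t) (hab : a ≤ b) :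
    IntervalIntegrable (ff t) MeasureTheory.volume a b := by
  apply ContinuousOn.intervalIntegrable
  rw [Set.uIcc_of_le hab]
  apply ContinuousOn.div continuousOn_const
  · exact (Real.continuous_sqrt.comp (by continuity)).continuousOn
  · intro u hu
    obtain ⟨h1, h2⟩ := hu
    exact ne_of_gt (Real.sqrt_pos.2 (by nlinarith))

lemma aux (t : ℝ) : ∀ n : ℕ, 1 ≤ n → (n : ℝ) < t →
    ∑ k ∈ Finset.Ioc 1 n, ff t k ≤ (∫ u in (1:ℝ)..(n:ℝ), ff t u) + (hh t n - hh t 1) := by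
  intro n
  induction n with
  | zero => intro h; omega
  | succ m ih =>
    intro h1 hlt
    rcases Nat.lt_or_ge m 1 with hm | hm
    · interval_cases m
      simp
    · have hmt : (m : ℝ) < t := by push_cast at hlt ⊢; linarith
      have hm1 : (1:ℝ) ≤ (m:ℝ) := by exact_mod_cast hm
      have ihm := ih hm hmt
      rw [Finset.sum_Ioc_succ_top (by omega)]
      have hI1 : IntervalIntegrable (ff t) MeasureTheory.volume 1 (m:ℝ) :=
        ff_intOn t 1 m one_pos hmt hm1
      have hI2 : IntervalIntegrable (ff t) MeasureTheory.volume (m:ℝ) ((m:ℝ)+1) :=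
        ff_intOn t m ((m:ℝ)+1) (by linarith) (by push_cast at hlt; linarith) (by linarith)
      have hsplit : (∫ u in (1:ℝ)..(m:ℝ), ff t u) + ∫ u in (m:ℝ)..((m:ℝ)+1), ff t u
          = ∫ u in (1:ℝ)..(((m:ℕ)+1:ℕ):ℝ), ff t u := by
        push_cast
        exact intervalIntegral.integral_add_adjacent_intervals hI1 hI2
      have hkey : ff t ((m:ℝ)+1) - (hh t ((m:ℝ)+1) - hh t (m:ℝ)) ≤ ∫ u in (m:ℝ)..((m:ℝ)+1), ff t u := by
        have hmono := intervalIntegral.integral_mono_on (by linarith : (m:ℝ) ≤ (m:ℝ)+1)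
          (intervalIntegrable_const (c := ff t ((m:ℝ)+1) - (hh t ((m:ℝ)+1) - hh t (m:ℝ))))
          hI2 (key t (m:ℝ) hm1 (by push_cast at hlt; linarith))
        rwa [intervalIntegral.integral_const, add_sub_cancel_left, one_smul] at hmono
      push_cast at hsplit ⊢
      linarith

lemma FTC (t a b : ℝ) (ha : 0 < a) (hb : b < t) (hab : a ≤ b) :
    ∫ u in a..b, ff t u
      = 2 * Real.arctan (Real.sqrt (b / (t - b))) - 2 * Real.arctan (Real.sqrt (a / (t - a))) := by
  apply intervalIntegral.integral_eq_sub_of_hasDerivAt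
  · intro u hu
    rw [Set.uIcc_of_le hab] at hu
    obtain ⟨h1, h2⟩ := hu
    have h0u : 0 < u := lt_of_lt_of_le ha h1
    have hut : u < t := lt_of_le_of_lt h2 hb
    have htu : 0 < t - u := by linarith
    have hg : HasDerivAt (fun v : ℝ => v / (t - v)) ((1 * (t - u) - u * (0 - 1)) / (t - u) ^ 2) u := by
      exact (hasDerivAt_id u).div ((hasDerivAt_const u t).sub (hasDerivAt_id u)) (ne_of_gt htu)
    have hgu : 0 < u / (t - u) := div_pos h0u htu
    have hs : HasDerivAt (fun v : ℝ => Real.sqrt (v / (t - v)))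
        (1 / (2 * Real.sqrt (u / (t - u))) * ((1 * (t - u) - u * (0 - 1)) / (t - u) ^ 2)) u :=
      (Real.hasDerivAt_sqrt (ne_of_gt hgu)).comp u hg
    have harc : HasDerivAt (fun v : ℝ => Real.arctan (Real.sqrt (v / (t - v))))
        (1 / (1 + Real.sqrt (u / (t - u)) ^ 2) *
          (1 / (2 * Real.sqrt (u / (t - u))) * ((1 * (t - u) - u * (0 - 1)) / (t - u) ^ 2))) u :=
      (Real.hasDerivAt_arctan _).comp u hs
    have := harc.const_mul 2
    convert this using 1
    · rfl
    have hsq : Real.sqrt (u / (t - u)) ^ 2 = u / (t - u) := Real.sq_sqrt hgu.le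
    rw [hsq, Real.sqrt_div h0u.le]
    have hsu : Real.sqrt u > 0 := Real.sqrt_pos.2 h0u
    have hsv : Real.sqrt (t - u) > 0 := Real.sqrt_pos.2 htu
    have h1' : Real.sqrt u ^ 2 = u := Real.sq_sqrt h0u.le
    have h2' : Real.sqrt (t - u) ^ 2 = t - u := Real.sq_sqrt htu.le
    have hprod : Real.sqrt (u * t - u ^ 2) = Real.sqrt u * Real.sqrt (t - u) := by
      rw [show u * t - u ^ 2 = u * (t - u) by ring, Real.sqrt_mul h0u.le]
    unfold ff
    rw [hprod]
    have hA : 1 + u / (t - u) = t / (t - u) := by field_simp; ring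
    have hB : (1 * (t - u) - u * (0 - 1)) = t := by ring
    rw [hA, hB]
    have hsune : Real.sqrt u ≠ 0 := ne_of_gt hsu
    have hsvne : Real.sqrt (t - u) ≠ 0 := ne_of_gt hsv
    have htune : t - u ≠ 0 := ne_of_gt htu
    have htne : t ≠ 0 := ne_of_gt (by linarith : (0:ℝ) < t)
    field_simp
    linear_combination (-1 : ℝ) * h2'
  · exact ff_intOn t a b ha hb hab

open Real in
/-- For real `1 ≤ x < t`,
`∑_{1 ≤ k ≤ x} 1/√(kt - k²) ≤ 2 arctan √(x/(t-x)) + 1/√(t-1) + 2√x/(t√(t-x))`. -/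
theorem stmt_5 (x t : ℝ) (hx : 1 ≤ x) (hxt : x < t) :
    ∑ k ∈ Finset.Icc 1 ⌊x⌋₊, 1 / Real.sqrt (k * t - (k : ℝ) ^ 2)
      ≤ 2 * Real.arctan (Real.sqrt (x / (t - x))) + 1 / Real.sqrt (t - 1)
        + 2 * Real.sqrt x / (t * Real.sqrt (t - x)) := by
  set n := ⌊x⌋₊ with hn
  have hn1 : 1 ≤ n := Nat.le_floor (by exact_mod_cast hx)
  have hnx : (n : ℝ) ≤ x := Nat.floor_le (by linarith)
  have hnt : (n : ℝ) < t := lt_of_le_of_lt hnx hxt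
  have hn1R : (1:ℝ) ≤ (n:ℝ) := by exact_mod_cast hn1
  have ht0 : 0 < t := by linarith
  have htx : 0 < t - x := by linarith
  -- rewrite sum
  have hsum : ∑ k ∈ Finset.Icc 1 n, 1 / Real.sqrt (k * t - (k : ℝ) ^ 2)
      = ff t 1 + ∑ k ∈ Finset.Ioc 1 n, ff t k := by
    rw [Finset.Icc_eq_cons_Ioc hn1, Finset.sum_cons]
    simp [ff]
  rw [hsum]
  have haux := aux t n hn1 hnt
  -- integral bound
  have hftc := FTC t 1 n one_pos hnt hn1R
  have harc1 : 0 ≤ Real.arctan (Real.sqrt (1 / (t - 1))) := by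
    rw [← Real.arctan_zero]
    exact Real.arctan_strictMono.monotone (Real.sqrt_nonneg _)
  have harcmono : Real.arctan (Real.sqrt ((n:ℝ) / (t - n))) ≤ Real.arctan (Real.sqrt (x / (t - x))) := by
    apply Real.arctan_strictMono.monotone
    apply Real.sqrt_le_sqrt
    rw [div_le_div_iff₀ (by linarith) htx]
    nlinarith
  have hint : (∫ u in (1:ℝ)..(n:ℝ), ff t u) ≤ 2 * Real.arctan (Real.sqrt (x / (t - x))) := by
    rw [hftc]; linarith
  -- h bound
  have hhb : hh t n - hh t 1 ≤ 2 * Real.sqrt x / (t * Real.sqrt (t - x)) := by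
    have hrhs : 0 ≤ 2 * Real.sqrt x / (t * Real.sqrt (t - x)) :=
      div_nonneg (by positivity) (mul_nonneg ht0.le (Real.sqrt_nonneg _))
    rcases le_or_gt (n:ℝ) (t / 2) with h1 | h1
    · have e1 : max (n:ℝ) (t / 2) = t / 2 := max_eq_right h1
      have e2 : max (1:ℝ) (t / 2) = t / 2 := max_eq_right (by linarith)
      unfold hh
      rw [e1, e2, sub_self]
      exact hrhs
    · have e1 : max (n:ℝ) (t / 2) = (n:ℝ) := max_eq_left h1.le
      have hfn : ff t n ≤ 2 * Real.sqrt x / (t * Real.sqrt (t - x)) := by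
        have hpos : 0 < (n:ℝ) * t - (n:ℝ) ^ 2 := by nlinarith
        have hprod : Real.sqrt ((n:ℝ) * t - (n:ℝ) ^ 2) = Real.sqrt n * Real.sqrt (t - n) := by
          rw [show (n:ℝ) * t - (n:ℝ) ^ 2 = n * (t - n) by ring, Real.sqrt_mul (by linarith)]
        unfold ff
        rw [div_le_div_iff₀ (Real.sqrt_pos.2 hpos) (by positivity)]
        rw [hprod]
        have ht2 : t ≤ 2 * Real.sqrt x * Real.sqrt n := by
          have h4 : t ^ 2 ≤ (2 * Real.sqrt x * Real.sqrt n) ^ 2 := by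
            have := Real.sq_sqrt (show (0:ℝ) ≤ x by linarith)
            have := Real.sq_sqrt (show (0:ℝ) ≤ (n:ℝ) by linarith)
            nlinarith
          calc t = Real.sqrt (t ^ 2) := (Real.sqrt_sq ht0.le).symm
            _ ≤ Real.sqrt ((2 * Real.sqrt x * Real.sqrt n) ^ 2) := Real.sqrt_le_sqrt h4
            _ = 2 * Real.sqrt x * Real.sqrt n := Real.sqrt_sq (by positivity)
        have hsx : Real.sqrt (t - x) ≤ Real.sqrt (t - n) := Real.sqrt_le_sqrt (by linarith)
        calc 1 * (t * Real.sqrt (t - x)) = t * Real.sqrt (t - x) := one_mul _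
          _ ≤ (2 * Real.sqrt x * Real.sqrt n) * Real.sqrt (t - n) :=
              mul_le_mul ht2 hsx (Real.sqrt_nonneg _) (by positivity)
          _ = 2 * Real.sqrt x * (Real.sqrt n * Real.sqrt (t - n)) := by ring
      have hh1 : 0 ≤ hh t 1 := ff_nonneg _ _
      unfold hh at hh1 ⊢
      rw [e1]
      linarith
  have hf1 : ff t 1 = 1 / Real.sqrt (t - 1) := by unfold ff; norm_num
  linarith
end

section
/- For every integer n ≥ 2, ∑_{k=1}^{n-1} 1/√(kn - k²) ≤ π + 1/√(n-1) + 2/√n. -/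
open Real

lemma deriv_g {N x : ℝ} (hx : 0 < x) (hxN : x < N) :
    HasDerivAt (fun y => 2 * Real.arctan (Real.sqrt (y / (N - y))))
      (1 / Real.sqrt (x * (N - x))) x := by
  have hNx : (0:ℝ) < N - x := by linarith
  have hu : HasDerivAt (fun y : ℝ => y / (N - y)) (N / (N - x)^2) x := by
    have h1 : HasDerivAt (fun y : ℝ => y) 1 x := hasDerivAt_id x
    have h2 : HasDerivAt (fun y : ℝ => N - y) (-1) x := by
      exact h1.const_sub N
    have h3 := h1.div h2 (ne_of_gt hNx)
    refine h3.congr_deriv (Eq.symm ?_)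
    field_simp
    ring
  have hupos : 0 < x / (N - x) := div_pos hx hNx
  have hs : HasDerivAt (fun y => Real.sqrt (y / (N - y)))
      (1 / (2 * Real.sqrt (x / (N - x))) * (N / (N - x)^2)) x :=
    (Real.hasDerivAt_sqrt (ne_of_gt hupos)).comp x hu
  have ha : HasDerivAt (fun y => Real.arctan (Real.sqrt (y / (N - y))))
      (1 / (1 + (Real.sqrt (x / (N - x)))^2) *
        (1 / (2 * Real.sqrt (x / (N - x))) * (N / (N - x)^2))) x :=
    (Real.hasDerivAt_arctan _).comp x hs
  have hfin := ha.const_mul 2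
  refine hfin.congr_deriv (Eq.symm ?_)
  rw [Real.sq_sqrt hupos.le, Real.sqrt_div hx.le, Real.sqrt_mul hx.le]
  have hsx : (0:ℝ) < Real.sqrt x := Real.sqrt_pos.2 hx
  have hsN : (0:ℝ) < Real.sqrt (N - x) := Real.sqrt_pos.2 hNx
  have e1 : Real.sqrt (N - x) ^ 2 = N - x := Real.sq_sqrt hNx.le
  have hNpos : (0:ℝ) < N := lt_trans hx hxN
  field_simp
  linear_combination (-N) * e1

lemma cont_g {N a b : ℝ} (hb : b < N) :
    ContinuousOn (fun y => 2 * Real.arctan (Real.sqrt (y / (N - y)))) (Set.Icc a b) := by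
  apply ContinuousOn.mul continuousOn_const
  apply Real.continuous_arctan.comp_continuousOn
  apply ContinuousOn.sqrt
  exact ContinuousOn.div continuousOn_id (by fun_prop)
    (fun x hx => sub_ne_zero.2 (ne_of_gt (lt_of_le_of_lt hx.2 hb)))

-- decreasing side: a ≥ 0, a+1 ≤ N/2  ⇒  f(a+1) ≤ g(a+1) - g(a)
lemma step_dec {N a : ℝ} (ha : 0 ≤ a) (hb : a + 1 ≤ N / 2) :
    1 / Real.sqrt ((a+1) * (N - (a+1))) ≤
      2 * Real.arctan (Real.sqrt ((a+1) / (N - (a+1)))) -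
      2 * Real.arctan (Real.sqrt (a / (N - a))) := by
  have hN : a + 1 < N := by linarith
  obtain ⟨c, hc, hceq⟩ := exists_hasDerivAt_eq_slope
    (fun y => 2 * Real.arctan (Real.sqrt (y / (N - y))))
    (fun y => 1 / Real.sqrt (y * (N - y))) (by linarith : a < a + 1)
    (cont_g hN) (fun x hx => deriv_g (by linarith [hx.1]) (by linarith [hx.2]))
  simp only [add_sub_cancel_left, div_one] at hceq
  rw [← hceq]
  have hc1 : 0 < c := lt_of_le_of_lt ha hc.1
  have hkey : c * (N - c) ≤ (a+1) * (N - (a+1)) := by nlinarith [hc.1, hc.2]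
  have hpos : 0 < Real.sqrt (c * (N - c)) :=
    Real.sqrt_pos.2 (by nlinarith [hc.2])
  exact one_div_le_one_div_of_le hpos (Real.sqrt_le_sqrt hkey)

-- increasing side: N/2 ≤ a, 0 < a, a+1 < N ⇒ f(a) ≤ g(a+1) - g(a)
lemma step_inc {N a : ℝ} (ha : 0 < a) (ha2 : N / 2 ≤ a) (hb : a + 1 < N) :
    1 / Real.sqrt (a * (N - a)) ≤
      2 * Real.arctan (Real.sqrt ((a+1) / (N - (a+1)))) -
      2 * Real.arctan (Real.sqrt (a / (N - a))) := by
  obtain ⟨c, hc, hceq⟩ := exists_hasDerivAt_eq_slope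
    (fun y => 2 * Real.arctan (Real.sqrt (y / (N - y))))
    (fun y => 1 / Real.sqrt (y * (N - y))) (by linarith : a < a + 1)
    (cont_g hb) (fun x hx => deriv_g (by linarith [hx.1]) (by linarith [hx.2]))
  simp only [add_sub_cancel_left, div_one] at hceq
  rw [← hceq]
  have hkey : c * (N - c) ≤ a * (N - a) := by nlinarith [hc.1, hc.2]
  have hpos : 0 < Real.sqrt (c * (N - c)) :=
    Real.sqrt_pos.2 (by nlinarith [hc.1, hc.2])
  exact one_div_le_one_div_of_le hpos (Real.sqrt_le_sqrt hkey)
lemma sum_dec {N : ℝ} : ∀ m : ℕ, (m : ℝ) ≤ N / 2 →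
    ∑ k ∈ Finset.Ioc 0 m, 1 / Real.sqrt (k * (N - k)) ≤
      2 * Real.arctan (Real.sqrt (m / (N - m))) := by
  intro m
  induction m with
  | zero => simp
  | succ m ih =>
    intro h
    have hm : (m : ℝ) ≤ N / 2 := by push_cast at h ⊢; linarith
    rw [Finset.sum_Ioc_succ_top (Nat.zero_le m)]
    have hd := step_dec (N := N) (a := (m : ℝ)) (Nat.cast_nonneg m) (by push_cast at h ⊢; linarith)
    push_cast
    push_cast at hd
    linarith [ih hm]

lemma sum_inc {N : ℝ} (m : ℕ) (hm2 : N / 2 ≤ (m : ℝ) + 1) :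
    ∀ j : ℕ, m ≤ j → ((j : ℝ) + 1 < N) →
    ∑ k ∈ Finset.Ioc m j, 1 / Real.sqrt (k * (N - k)) ≤
      2 * Real.arctan (Real.sqrt ((j+1) / (N - (j+1)))) -
      2 * Real.arctan (Real.sqrt ((m+1) / (N - (m+1)))) := by
  intro j
  induction j with
  | zero =>
    intro hj _
    interval_cases m
    simp
  | succ j ih =>
    intro hj hN
    rcases Nat.lt_or_ge m (j+1) with hmj | hmj
    · have hj' : m ≤ j := by omega
      have hN' : (j : ℝ) + 1 < N := by push_cast at hN ⊢; linarith
      rw [Finset.sum_Ioc_succ_top hj']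
      have hi := step_inc (N := N) (a := (j : ℝ) + 1)
        (by positivity) (by have h3 : (m:ℝ) ≤ (j:ℝ) := Nat.cast_le.2 hj'; linarith)
        (by push_cast at hN ⊢; linarith)
      push_cast
      push_cast at hi
      linarith [ih hj' hN']
    · have : m = j + 1 := by omega
      subst this
      simp
lemma g_mono {N a b : ℝ} (ha : 0 ≤ a) (hab : a ≤ b) (hb : b < N) :
    2 * Real.arctan (Real.sqrt (a / (N - a))) ≤
    2 * Real.arctan (Real.sqrt (b / (N - b))) := by
  have h1 : a / (N - a) ≤ b / (N - b) :=
    div_le_div₀ (le_trans ha hab) hab (by linarith) (by linarith)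
  have := Real.arctan_strictMono.monotone (Real.sqrt_le_sqrt h1)
  linarith
/-- For every integer `n ≥ 2`, `∑_{k=1}^{n-1} 1/√(kn - k²) ≤ π + 1/√(n-1) + 2/√n`. -/
theorem stmt_6 (n : ℕ) (hn : 2 ≤ n) :
    ∑ k ∈ Finset.Icc 1 (n - 1), 1 / Real.sqrt (k * n - (k : ℝ) ^ 2)
      ≤ Real.pi + 1 / Real.sqrt ((n : ℝ) - 1) + 2 / Real.sqrt n := by
  have hsummand : ∀ k ∈ Finset.Icc 1 (n-1),
      1 / Real.sqrt (k * n - (k:ℝ)^2) = 1 / Real.sqrt (k * ((n:ℝ) - k)) := by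
    intro k hk
    congr 2
    ring
  rw [Finset.sum_congr rfl hsummand]
  rcases eq_or_lt_of_le hn with h2 | h3
  · -- n = 2
    subst h2
    norm_num
    nlinarith [Real.pi_pos, Real.sqrt_nonneg (2:ℝ)]
  · -- n ≥ 3
    obtain ⟨p, rfl⟩ : ∃ p, n = p + 3 := ⟨n - 3, by omega⟩
    set N : ℝ := ((p:ℕ):ℝ) + 3 with hN
    have hcast : ((p + 3 : ℕ) : ℝ) = N := by push_cast [hN]; ring
    rw [hcast]
    set m := (p + 3) / 2 with hm
    have hm1 : 1 ≤ m := by omega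
    have hmp : m ≤ p + 1 := by omega
    have hmA : (m:ℝ) ≤ N / 2 := by
      have : 2 * m ≤ p + 3 := by omega
      have := (Nat.cast_le (α := ℝ)).2 this
      push_cast at this
      rw [hN]; linarith
    have hmB : N / 2 ≤ (m:ℝ) + 1 := by
      have : p + 3 ≤ 2 * m + 1 := by omega
      have := (Nat.cast_le (α := ℝ)).2 this
      push_cast at this
      rw [hN]; linarith
    have e1 : p + 3 - 1 = p + 2 := by omega
    rw [e1, show Finset.Icc 1 (p+2) = Finset.Ioc 0 (p+2) from by rw [← Finset.Icc_add_one_left_eq_Ioc]; rfl]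
    rw [show p + 2 = (p + 1) + 1 from rfl, Finset.sum_Ioc_succ_top (Nat.zero_le (p+1))]
    rw [← Finset.sum_Ioc_consecutive _ (Nat.zero_le m) hmp]
    have A := sum_dec (N := N) m hmA
    have B := sum_inc (N := N) m hmB (p+1) hmp (by push_cast [hN]; linarith)
    have C := g_mono (N := N) (a := (m:ℝ)) (b := (m:ℝ) + 1)
      (Nat.cast_nonneg m) (by linarith) (by
        have : (m:ℝ) ≤ (p:ℝ) + 1 := by exact_mod_cast hmp
        rw [hN]; linarith)
    -- the top value of g
    have hNe : N - (((p:ℝ) + 1) + 1) = 1 := by rw [hN]; ring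
    have htop : 2 * Real.arctan (Real.sqrt ((((p:ℝ)+1)+1) / (N - (((p:ℝ)+1)+1)))) ≤ π := by
      have := Real.arctan_lt_pi_div_two (Real.sqrt ((((p:ℝ)+1)+1) / (N - (((p:ℝ)+1)+1))))
      linarith
    -- last term
    have hlast : 1 / Real.sqrt ((((p:ℝ)+1+1)) * (N - (((p:ℝ)+1+1)))) = 1 / Real.sqrt (N - 1) := by
      congr 2
      rw [hN]
      ring
    push_cast at B ⊢
    rw [hlast]
    have hpos : (0:ℝ) ≤ 2 / Real.sqrt N := by positivity
    push_cast at A C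
    linarith
end

section
/- Let Q(n) denote the number of partitions of n into distinct parts, with Q(0) = 1, and suppose Q(n) < (π/(2√(3n)))·e^{π√(n/3)} for all n ≥ 1. Then the convolution Q₂(n) = ∑_{k=0}^n Q(k)Q(n-k) satisfies Q₂(n) < (π/√(3n))·e^{π√(n/3)} + (π²/12)·e^{π√(2n/3)}·(π + 1/√(n-1) + 2/√n) for all n ≥ 2. -/
open Real Finset

lemma myHasDeriv (c x : ℝ) (hx : 0 < x) (hx2 : x < c) :
    HasDerivAt (fun y => Real.arcsin ((2*y - c)/c)) (1 / Real.sqrt (x*(c - x))) x := by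
  have hc : 0 < c := hx.trans hx2
  have hu : HasDerivAt (fun y : ℝ => (2*y - c)/c) (2/c) x := by
    have h1 : HasDerivAt (fun y : ℝ => 2*y) 2 x := by
      simpa using (hasDerivAt_id x).const_mul (2:ℝ)
    simpa using (h1.sub_const c).div_const c
  have hne1 : (2*x - c)/c ≠ -1 := by
    have : -1 < (2*x - c)/c := by
      rw [lt_div_iff₀ hc]; linarith
    linarith
  have hne2 : (2*x - c)/c ≠ 1 := by
    have : (2*x - c)/c < 1 := by
      rw [div_lt_one hc]; linarith
    linarith
  have h := (Real.hasDerivAt_arcsin hne1 hne2).comp x hu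
  have hxc : 0 < x * (c - x) := by nlinarith
  have hsq : Real.sqrt (x*(c-x)) > 0 := Real.sqrt_pos.mpr hxc
  refine h.congr_deriv ?_
  have h1 : 1 - ((2*x - c)/c)^2 = (2/c)^2 * (x*(c - x)) := by
    field_simp; ring
  rw [h1, Real.sqrt_mul (by positivity : (0:ℝ) ≤ (2/c)^2) (x*(c-x)),
    Real.sqrt_sq (by positivity : (0:ℝ) ≤ 2/c)]
  have hs : Real.sqrt (x*(c-x)) ≠ 0 := ne_of_gt hsq
  have hc' : c ≠ 0 := ne_of_gt hc
  have hxx : 0 < c - x := by linarith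
  field_simp

lemma myIntLe (c : ℝ) (hc : 2 ≤ c) :
    ∫ x in (1:ℝ)..(c-1), 1 / Real.sqrt (x*(c - x)) ≤ Real.pi := by
  have hcont : ContinuousOn (fun x : ℝ => 1 / Real.sqrt (x*(c - x))) (Set.Icc 1 (c-1)) := by
    apply ContinuousOn.div continuousOn_const
    · exact (Real.continuous_sqrt.comp_continuousOn
        ((continuousOn_id.mul (continuousOn_const.sub continuousOn_id))))
    · intro x hx
      have := hx.1; have := hx.2
      have : 0 < x * (c - x) := by nlinarith [hx.1, hx.2]
      positivity
  have hint : IntervalIntegrable (fun x : ℝ => 1 / Real.sqrt (x*(c - x))) MeasureTheory.volume 1 (c-1) := by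
    apply hcont.intervalIntegrable_of_Icc (by linarith)
  have heq := intervalIntegral.integral_eq_sub_of_hasDerivAt
    (f := fun y => Real.arcsin ((2*y - c)/c))
    (f' := fun x => 1 / Real.sqrt (x*(c - x)))
    (a := 1) (b := c-1)
    (fun x hx => by
      rw [Set.uIcc_of_le (by linarith)] at hx
      exact myHasDeriv c x (by linarith [hx.1]) (by linarith [hx.2])) hint
  rw [heq]
  show Real.arcsin ((2*(c-1) - c)/c) - Real.arcsin ((2*(1:ℝ) - c)/c) ≤ Real.pi
  have h1 : (2*(c-1) - c)/c = (c-2)/c := by ring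
  have h2 : (2*(1:ℝ) - c)/c = -((c-2)/c) := by ring
  rw [h1, h2, Real.arcsin_neg]
  have := Real.arcsin_le_pi_div_two ((c-2)/c)
  linarith

noncomputable def Fc (c : ℝ) (x : ℝ) : ℝ := 1 / Real.sqrt (x * (c - x))

lemma mySumLe (n : ℕ) (hn : 2 ≤ n) :
    ∑ k ∈ Finset.Ico 1 n, (1:ℝ) / Real.sqrt ((k:ℝ) * ((n:ℝ) - (k:ℝ))) ≤
      Real.pi + 2 / Real.sqrt ((n:ℝ) - 1) := by
  have hgoal : ∑ k ∈ Finset.Ico 1 n, (1:ℝ) / Real.sqrt ((k:ℝ) * ((n:ℝ) - (k:ℝ)))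
      = ∑ k ∈ Finset.Ico 1 n, Fc (n:ℝ) (k:ℝ) := rfl
  rw [hgoal]
  set c : ℝ := (n:ℝ) with hcdef
  have hc2 : (2:ℝ) ≤ c := by rw [hcdef]; exact_mod_cast hn
  rcases eq_or_lt_of_le hn with h2 | h3
  · -- n = 2
    subst h2
    rw [show Finset.Ico 1 2 = {1} from rfl, Finset.sum_singleton]
    have : Fc c ((1:ℕ):ℝ) = 1 := by
      simp [Fc, hcdef]
      norm_num
    rw [this]
    have hpi := Real.pi_pos
    have : (0:ℝ) ≤ 2 / Real.sqrt (c - 1) := by positivity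
    have hc1 : c - 1 = 1 := by rw [hcdef]; norm_num
    rw [hc1, Real.sqrt_one]
    linarith
  · -- n ≥ 3
    have h3' : 3 ≤ n := h3
    set m := n / 2 with hm
    have hm1 : 1 ≤ m := by omega
    have hmn : m + 1 ≤ n - 1 := by omega
    have h2mn : 2 * m ≤ n := by omega
    have h2mn' : n + 1 ≤ 2 * (m + 1) := by omega
    have hn1cast : ((n-1:ℕ):ℝ) = c - 1 := by
      push_cast [Nat.cast_sub (by omega : 1 ≤ n)]; ring
    have hmcast : 2 * (m:ℝ) ≤ c := by rw [hcdef]; exact_mod_cast h2mn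
    have hmcast' : c + 1 ≤ 2 * ((m:ℝ) + 1) := by rw [hcdef]; exact_mod_cast h2mn'
    have hcm1 : (m:ℝ) + 1 ≤ c - 1 := by
      have := (Nat.cast_le (α := ℝ)).mpr hmn
      push_cast [Nat.cast_sub (by omega : 1 ≤ n)] at this
      linarith
    have hm1' : (1:ℝ) ≤ (m:ℝ) := by exact_mod_cast hm1
    -- continuity / integrability
    have hcont : ContinuousOn (Fc c) (Set.Icc (1:ℝ) (c-1)) := by
      apply ContinuousOn.div continuousOn_const
      · exact Real.continuous_sqrt.comp_continuousOn
          (continuousOn_id.mul (continuousOn_const.sub continuousOn_id))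
      · intro x hx
        have h1 := hx.1; have h2 := hx.2
        have : 0 < x * (c - x) := by nlinarith
        positivity
    have hint : ∀ a b : ℝ, 1 ≤ a → a ≤ b → b ≤ c - 1 →
        IntervalIntegrable (Fc c) MeasureTheory.volume a b := by
      intro a b ha hab hb
      apply ContinuousOn.intervalIntegrable
      apply hcont.mono
      rw [Set.uIcc_of_le hab]
      exact Set.Icc_subset_Icc ha hb
    -- monotonicity
    have hanti : AntitoneOn (Fc c) (Set.Icc ((1:ℕ):ℝ) ((m:ℕ):ℝ)) := by
      intro x hx y hy hxy
      simp only [Nat.cast_one] at hx hy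
      have hx1 := hx.1; have hxm := hx.2; have hym := hy.2
      have hxpos : 0 < x * (c - x) := by nlinarith
      have hle : x * (c - x) ≤ y * (c - y) := by nlinarith
      exact one_div_le_one_div_of_le (Real.sqrt_pos.mpr hxpos) (Real.sqrt_le_sqrt hle)
    have hmono : MonotoneOn (Fc c) (Set.Icc (((m+1:ℕ)):ℝ) (((n-1:ℕ)):ℝ)) := by
      intro x hx y hy hxy
      rw [hn1cast] at hx hy
      push_cast at hx hy
      have hx1 := hx.1; have hxc := hx.2; have hy1 := hy.1; have hyc := hy.2
      have hypos : 0 < y * (c - y) := by nlinarith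
      have hle : y * (c - y) ≤ x * (c - x) := by nlinarith
      exact one_div_le_one_div_of_le (Real.sqrt_pos.mpr hypos) (Real.sqrt_le_sqrt hle)
    -- sum splits
    have e1 := Finset.sum_eq_sum_Ico_succ_bot (by omega : 1 < n) (fun k : ℕ => Fc c (k:ℝ))
    have e2 := Finset.sum_Ico_succ_top (by omega : 2 ≤ n - 1) (fun k : ℕ => Fc c (k:ℝ))
    rw [Nat.sub_add_cancel (by omega : 1 ≤ n)] at e2
    have e3 := Finset.sum_Ico_consecutive (fun k : ℕ => Fc c (k:ℝ))
      (by omega : 2 ≤ m+1) (by omega : m+1 ≤ n-1)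
    -- bound 1
    have hb1 : ∑ k ∈ Finset.Ico 2 (m+1), Fc c (k:ℝ) ≤ ∫ x in ((1:ℕ):ℝ)..((m:ℕ):ℝ), Fc c x := by
      have h := AntitoneOn.sum_le_integral_Ico hm1 hanti
      calc ∑ k ∈ Finset.Ico 2 (m+1), Fc c (k:ℝ)
          = ∑ i ∈ Finset.Ico 1 m, Fc c (((i+1:ℕ)):ℝ) := by
            rw [Finset.sum_Ico_eq_sum_range, Finset.sum_Ico_eq_sum_range,
              show m + 1 - 2 = m - 1 from by omega]
            exact Finset.sum_congr rfl (fun i _ => by norm_num; ring_nf)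
        _ ≤ _ := h
    -- bound 2
    have hb2 : ∑ k ∈ Finset.Ico (m+1) (n-1), Fc c (k:ℝ)
        ≤ ∫ x in (((m+1:ℕ)):ℝ)..(((n-1:ℕ)):ℝ), Fc c x :=
      MonotoneOn.sum_le_integral_Ico hmn hmono
    -- integral combination
    have hgap : (0:ℝ) ≤ ∫ x in ((m:ℝ))..((m:ℝ)+1), Fc c x :=
      intervalIntegral.integral_nonneg (by linarith) (fun x hx => by
        unfold Fc; positivity)
    have hadd1 := intervalIntegral.integral_add_adjacent_intervals
      (hint 1 m le_rfl hm1' (by linarith))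
      (hint m (m+1) hm1' (by linarith) (by linarith))
    have hadd2 := intervalIntegral.integral_add_adjacent_intervals
      (hint 1 (m+1) le_rfl (by linarith) (by linarith))
      (hint (m+1) (c-1) (by linarith) hcm1 le_rfl)
    have hml := myIntLe c hc2
    have hfc : ∀ x, Fc c x = 1 / Real.sqrt (x * (c - x)) := fun x => rfl
    have hintle : (∫ x in (1:ℝ)..(c-1), Fc c x) ≤ Real.pi := by
      rw [show (∫ x in (1:ℝ)..(c-1), Fc c x) = ∫ x in (1:ℝ)..(c-1), 1 / Real.sqrt (x*(c-x)) from rfl]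
      exact hml
    -- endpoint values
    have hcpos : (0:ℝ) < c - 1 := by linarith
    have hf1 : Fc c ((1:ℕ):ℝ) = 1 / Real.sqrt (c - 1) := by
      unfold Fc; norm_num
    have hfn : Fc c (((n-1:ℕ)):ℝ) = 1 / Real.sqrt (c - 1) := by
      unfold Fc; rw [hn1cast, show (c-1) * (c - (c-1)) = c - 1 from by ring]
    -- cast-normalize integral endpoints
    rw [Nat.cast_one] at hb1
    rw [hn1cast] at hb2
    rw [Nat.cast_add, Nat.cast_one] at hb2
    beta_reduce at e3
    rw [e1, e2, ← e3, hf1, hfn]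
    have key : ∑ i ∈ Finset.Ico 2 (m+1), Fc c (i:ℝ) + ∑ i ∈ Finset.Ico (m+1) (n-1), Fc c (i:ℝ)
        ≤ Real.pi := by linarith
    have key2 : 1 / Real.sqrt (c-1) + 1 / Real.sqrt (c-1) ≤ 2 / Real.sqrt (c-1) := by
      rw [← add_div]
      norm_num
    linarith

set_option maxHeartbeats 1000000 in
/-- Let `Q(n)` be the number of partitions of `n` into distinct parts.  If
`Q(n) < (π/(2√(3n))) e^{π√(n/3)}` for all `n ≥ 1`, then the convolution
`Q₂(n) = ∑_{k=0}^n Q(k)Q(n-k)` satisfies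
`Q₂(n) < (π/√(3n)) e^{π√(n/3)} + (π²/12) e^{π√(2n/3)} (π + 1/√(n-1) + 2/√n)`
for all `n ≥ 2`. -/
theorem stmt_7
    (Q : ℕ → ℕ) (hQdef : ∀ n, Q n = (Nat.Partition.distincts n).card)
    (hQ : ∀ n : ℕ, 1 ≤ n →
      (Q n : ℝ) < Real.pi / (2 * Real.sqrt (3 * n)) * Real.exp (Real.pi * Real.sqrt (n / 3)))
    (n : ℕ) (hn : 2 ≤ n) :
    ((∑ k ∈ Finset.range (n + 1), Q k * Q (n - k) : ℕ) : ℝ)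
      < Real.pi / Real.sqrt (3 * n) * Real.exp (Real.pi * Real.sqrt (n / 3))
        + Real.pi ^ 2 / 12 * Real.exp (Real.pi * Real.sqrt (2 * n / 3))
          * (Real.pi + 1 / Real.sqrt ((n : ℝ) - 1) + 2 / Real.sqrt n) := by
  have hQ0 : Q 0 = 1 := by rw [hQdef]; decide
  have hsplit : (∑ k ∈ Finset.range (n + 1), Q k * Q (n - k)) =
      Q 0 * Q n + (∑ k ∈ Finset.Ico 1 n, Q k * Q (n - k)) + Q n * Q 0 := by
    rw [Finset.sum_range_succ, Nat.sub_self]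
    congr 1
    rw [Finset.range_eq_Ico, Finset.sum_eq_sum_Ico_succ_bot (by omega : 0 < n)]
    norm_num
  rw [hsplit]
  push_cast
  have hQ0c : (Q 0 : ℝ) = 1 := by rw [hQ0]; norm_num
  rw [hQ0c, mul_one, one_mul]
  -- edge bound
  have hs3n : (0:ℝ) < Real.sqrt (3*(n:ℝ)) := Real.sqrt_pos.mpr (by positivity)
  have hedge : 2 * (Q n : ℝ) <
      Real.pi / Real.sqrt (3*(n:ℝ)) * Real.exp (Real.pi * Real.sqrt ((n:ℝ)/3)) := by
    have h := hQ n (by omega)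
    have he : Real.pi / Real.sqrt (3*(n:ℝ)) * Real.exp (Real.pi * Real.sqrt ((n:ℝ)/3))
        = 2 * (Real.pi / (2*Real.sqrt (3*(n:ℝ))) * Real.exp (Real.pi * Real.sqrt ((n:ℝ)/3))) := by
      field_simp
    rw [he]
    linarith
  -- middle term bound
  set C := Real.pi^2/12 * Real.exp (Real.pi * Real.sqrt (2*(n:ℝ)/3)) with hC
  have hCpos : 0 < C := by rw [hC]; positivity
  have hterm : ∀ k ∈ Finset.Ico 1 n, (Q k : ℝ) * (Q (n-k) : ℝ) ≤
      C * (1 / Real.sqrt ((k:ℝ)*((n:ℝ)-(k:ℝ)))) := by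
    intro k hk
    rw [Finset.mem_Ico] at hk
    obtain ⟨hk1, hkn⟩ := hk
    have hk1' : (1:ℝ) ≤ (k:ℝ) := by exact_mod_cast hk1
    have hnkc : ((n-k:ℕ):ℝ) = (n:ℝ) - (k:ℝ) := by
      push_cast [Nat.cast_sub hkn.le]; ring
    have hnk1 : (1:ℝ) ≤ (n:ℝ) - (k:ℝ) := by
      rw [← hnkc]; exact_mod_cast (by omega : 1 ≤ n - k)
    have ha := hQ k (by omega)
    have hb := hQ (n-k) (by omega)
    rw [hnkc] at hb
    set sk := Real.sqrt (3*(k:ℝ)) with hsk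
    set sn := Real.sqrt (3*((n:ℝ)-(k:ℝ))) with hsn
    set s := Real.sqrt ((k:ℝ)*((n:ℝ)-(k:ℝ))) with hs
    have hskp : 0 < sk := Real.sqrt_pos.mpr (by positivity)
    have hsnp : 0 < sn := Real.sqrt_pos.mpr (by nlinarith)
    have hsp : 0 < s := Real.sqrt_pos.mpr (by nlinarith)
    have hprod : sk * sn = 3 * s := by
      rw [hsk, hsn, hs, ← Real.sqrt_mul (by positivity : (0:ℝ) ≤ 3*(k:ℝ)),
        show (3*(k:ℝ))*(3*((n:ℝ)-(k:ℝ))) = 3^2*((k:ℝ)*((n:ℝ)-(k:ℝ))) from by ring,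
        Real.sqrt_mul (by positivity : (0:ℝ) ≤ (3:ℝ)^2),
        Real.sqrt_sq (by norm_num : (0:ℝ) ≤ (3:ℝ))]
    set E1 := Real.exp (Real.pi * Real.sqrt ((k:ℝ)/3)) with hE1
    set E2 := Real.exp (Real.pi * Real.sqrt (((n:ℝ)-(k:ℝ))/3)) with hE2
    have hexp : E1 * E2 ≤ Real.exp (Real.pi * Real.sqrt (2*(n:ℝ)/3)) := by
      rw [hE1, hE2, ← Real.exp_add]
      apply Real.exp_le_exp.mpr
      rw [← mul_add]
      apply mul_le_mul_of_nonneg_left _ Real.pi_pos.le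
      have h1 : (Real.sqrt ((k:ℝ)/3) + Real.sqrt (((n:ℝ)-(k:ℝ))/3))^2 ≤ 2*(n:ℝ)/3 := by
        have e1 := Real.sq_sqrt (by positivity : (0:ℝ) ≤ (k:ℝ)/3)
        have e2 := Real.sq_sqrt (show (0:ℝ) ≤ ((n:ℝ)-(k:ℝ))/3 by linarith)
        nlinarith [sq_nonneg (Real.sqrt ((k:ℝ)/3) - Real.sqrt (((n:ℝ)-(k:ℝ))/3)),
          Real.sqrt_nonneg ((k:ℝ)/3), Real.sqrt_nonneg (((n:ℝ)-(k:ℝ))/3)]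
      have h2 := Real.sqrt_le_sqrt h1
      rwa [Real.sqrt_sq (by positivity)] at h2
    have hstep1 : (Q k : ℝ) * (Q (n-k) : ℝ) ≤
        (Real.pi/(2*sk)*E1) * (Real.pi/(2*sn)*E2) :=
      mul_le_mul ha.le hb.le (Nat.cast_nonneg _) (by positivity)
    have heq : (Real.pi/(2*sk)*E1) * (Real.pi/(2*sn)*E2)
        = Real.pi^2/12 * (E1*E2) * (1/s) := by
      have hden : (2*sk)*(2*sn) = 12 * s := by
        rw [show (2*sk)*(2*sn) = 4*(sk*sn) from by ring, hprod]; ring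
      rw [show (Real.pi/(2*sk)*E1) * (Real.pi/(2*sn)*E2)
          = (Real.pi*Real.pi)/((2*sk)*(2*sn)) * (E1*E2) from by ring, hden]
      ring
    have hstep2 : Real.pi^2/12 * (E1*E2) * (1/s) ≤ C * (1/s) := by
      rw [hC]
      exact mul_le_mul_of_nonneg_right
        (mul_le_mul_of_nonneg_left hexp (by positivity)) (by positivity)
    calc (Q k : ℝ) * (Q (n-k) : ℝ) ≤ _ := hstep1
      _ = _ := heq
      _ ≤ _ := hstep2
  have hmid : ∑ k ∈ Finset.Ico 1 n, (Q k : ℝ) * (Q (n-k) : ℝ)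
      ≤ C * (Real.pi + 2 / Real.sqrt ((n:ℝ) - 1)) := by
    calc ∑ k ∈ Finset.Ico 1 n, (Q k : ℝ) * (Q (n-k) : ℝ)
        ≤ ∑ k ∈ Finset.Ico 1 n, C * (1 / Real.sqrt ((k:ℝ)*((n:ℝ)-(k:ℝ)))) :=
          Finset.sum_le_sum hterm
      _ = C * ∑ k ∈ Finset.Ico 1 n, (1:ℝ) / Real.sqrt ((k:ℝ)*((n:ℝ)-(k:ℝ))) := by
          rw [Finset.mul_sum]
      _ ≤ C * (Real.pi + 2 / Real.sqrt ((n:ℝ) - 1)) :=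
          mul_le_mul_of_nonneg_left (mySumLe n hn) hCpos.le
  have hn2 : (2:ℝ) ≤ (n:ℝ) := by exact_mod_cast hn
  have hsn : (0:ℝ) < Real.sqrt (n:ℝ) := Real.sqrt_pos.mpr (by linarith)
  have hsn1 : (0:ℝ) < Real.sqrt ((n:ℝ)-1) := Real.sqrt_pos.mpr (by linarith)
  have hfrac : 1 / Real.sqrt ((n:ℝ)-1) ≤ 2 / Real.sqrt (n:ℝ) := by
    rw [div_le_div_iff₀ hsn1 hsn]
    have h4 : Real.sqrt (n:ℝ) ≤ 2 * Real.sqrt ((n:ℝ)-1) := by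
      have h5 : Real.sqrt (n:ℝ) ≤ Real.sqrt (4*((n:ℝ)-1)) := Real.sqrt_le_sqrt (by linarith)
      rwa [show (4:ℝ)*((n:ℝ)-1) = 2^2*((n:ℝ)-1) from by ring,
        Real.sqrt_mul (by positivity : (0:ℝ) ≤ (2:ℝ)^2),
        Real.sqrt_sq (by norm_num : (0:ℝ) ≤ (2:ℝ))] at h5
    linarith
  have hfin : C * (Real.pi + 2 / Real.sqrt ((n:ℝ)-1))
      ≤ C * (Real.pi + 1 / Real.sqrt ((n:ℝ)-1) + 2 / Real.sqrt (n:ℝ)) := by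
    apply mul_le_mul_of_nonneg_left _ hCpos.le
    have e1 : 2/Real.sqrt ((n:ℝ)-1) = 2*(1/Real.sqrt ((n:ℝ)-1)) := by ring
    have e2 : 2/Real.sqrt (n:ℝ) = 2*(1/Real.sqrt (n:ℝ)) := by ring
    linarith
  linarith [hedge, hmid, hfin]
end
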